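/- Let c ∈ ℤ^k with S̃_c ≠ ∅, let u ∈ S̃_c, let p = π(c), and let F_p be the minimal face of Z containing p. Then dim span(F_p − p) + dim span(S̃_c − u) = k − |J_c| + dim( ker(φ) ∩ span(S̃_c − u) ), where dim denotes Module.finrank over ℝ. (Here dim span(S̃_c − u) is the dimension of any lift of the Φ-stratum S_c.) -/

import Mathlib

/-- The linear map `φ : ℝⁿ → ℝᵏ` given by pairing with the integer vectors `v j`. -/
noncomputable def phiMap {n k : ℕ} (v : Fin k → Fin n → ℤ) :
    (Fin n → ℝ) →ₗ[ℝ] (Fin k → ℝ) where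
  toFun u := fun j => ∑ i, u i * (v j i : ℝ)
  map_add' u w := by
    funext j
    simp [add_mul, Finset.sum_add_distrib]
  map_smul' r u := by
    funext j
    simp [Finset.mul_sum, mul_assoc]

/-- The map `Φ : ℝⁿ → ℤᵏ`, `Φ(u)_j = ⌈⟨u, v_j⟩⌉`. -/
noncomputable def PhiMap {n k : ℕ} (v : Fin k → Fin n → ℤ) (u : Fin n → ℝ) : Fin k → ℤ :=
  fun j => ⌈∑ i, u i * (v j i : ℝ)⌉

open Module Submodule

lemma rn {V W : Type*} [AddCommGroup V] [Module ℝ V] [AddCommGroup W] [Module ℝ W]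
    [FiniteDimensional ℝ V] (f : V →ₗ[ℝ] W) (p : Submodule ℝ V) :
    finrank ℝ (Submodule.map f p) + finrank ℝ ↥(LinearMap.ker f ⊓ p) = finrank ℝ p := by
  have h := LinearMap.finrank_range_add_finrank_ker (f ∘ₗ p.subtype)
  rw [LinearMap.range_comp, Submodule.range_subtype] at h
  rw [LinearMap.ker_comp] at h
  have e : (Submodule.comap p.subtype (LinearMap.ker f)) ≃ₗ[ℝ] ↥(LinearMap.ker f ⊓ p) := by
    have heq : Submodule.comap p.subtype (LinearMap.ker f) =
        Submodule.comap p.subtype (LinearMap.ker f ⊓ p) := by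
      rw [Submodule.comap_inf, Submodule.comap_subtype_self, inf_top_eq]
    rw [heq]
    exact Submodule.comapSubtypeEquivOfLe inf_le_right
  rw [e.finrank_eq] at h
  simpa using h

lemma phi_mem {n k : ℕ} (v : Fin k → Fin n → ℤ) {c : Fin k → ℤ} {y : Fin n → ℝ} :
    PhiMap v y = c ↔ ∀ j, (c j : ℝ) - 1 < phiMap v y j ∧ phiMap v y j ≤ (c j : ℝ) := by
  rw [funext_iff]
  exact forall_congr' fun j => Int.ceil_eq_iff

lemma phi_int_eq {n k : ℕ} (v : Fin k → Fin n → ℤ) {c : Fin k → ℤ} {y : Fin n → ℝ}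
    (h : PhiMap v y = c) {j : Fin k} (m : ℤ) (hm : phiMap v y j = (m : ℝ)) :
    phiMap v y j = (c j : ℝ) := by
  have h2 := (phi_mem v).1 h j
  rw [hm] at h2 ⊢
  have h1 : (c j : ℝ) < (m : ℝ) + 1 := by linarith [h2.1]
  have h1' : c j < m + 1 := by exact_mod_cast h1
  have h2' : m ≤ c j := by exact_mod_cast h2.2
  have : m = c j := by omega
  exact_mod_cast congrArg (Int.cast : ℤ → ℝ) this

lemma exists_interior {n k : ℕ} (v : Fin k → Fin n → ℤ) (c : Fin k → ℤ) (u : Fin n → ℝ)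
    (hu : PhiMap v u = c) :
    ∃ y0, PhiMap v y0 = c ∧ ∀ j, (∃ y, PhiMap v y = c ∧ ∀ m : ℤ, phiMap v y j ≠ (m : ℝ)) →
      phiMap v y0 j < (c j : ℝ) := by
  classical
  set P : Fin k → Prop := fun j => ∃ y, PhiMap v y = c ∧ ∀ m : ℤ, phiMap v y j ≠ (m : ℝ) with hP
  set N := Finset.univ.filter P with hN
  have hmemN : ∀ j, j ∈ N ↔ P j := by intro j; simp [hN]
  rcases eq_or_ne N ∅ with hNe | hNe
  · refine ⟨u, hu, fun j hj => absurd ((hmemN j).2 hj) ?_⟩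
    rw [hNe]; simp
  · have hNne : N.Nonempty := Finset.nonempty_iff_ne_empty.2 hNe
    set w : Fin k → (Fin n → ℝ) := fun j =>
      if h : P j then h.choose else u with hw
    have hwc : ∀ j, PhiMap v (w j) = c := by
      intro j
      by_cases h : P j
      · simp only [hw, dif_pos h]; exact h.choose_spec.1
      · simp only [hw, dif_neg h]; exact hu
    have hwne : ∀ j ∈ N, ∀ m : ℤ, phiMap v (w j) j ≠ (m : ℝ) := by
      intro j hj
      have h := (hmemN j).1 hj
      simp only [hw, dif_pos h]
      exact h.choose_spec.2
    have hterm : ∀ j i, (c i : ℝ) - 1 < phiMap v (w j) i ∧ phiMap v (w j) i ≤ (c i : ℝ) :=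
      fun j => (phi_mem v).1 (hwc j)
    set y0 := (N.card : ℝ)⁻¹ • ∑ j ∈ N, w j with hy0
    have hcard : (0 : ℝ) < N.card := by exact_mod_cast Finset.card_pos.2 hNne
    have happ : ∀ i, phiMap v y0 i = (N.card : ℝ)⁻¹ * ∑ j ∈ N, phiMap v (w j) i := by
      intro i
      rw [hy0, map_smul, map_sum]
      simp [Finset.sum_apply]
    have hub : ∀ i, phiMap v y0 i ≤ (c i : ℝ) := by
      intro i
      rw [happ]
      have hs : ∑ j ∈ N, phiMap v (w j) i ≤ (N.card : ℝ) * c i := by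
        calc ∑ j ∈ N, phiMap v (w j) i ≤ ∑ _j ∈ N, (c i : ℝ) :=
              Finset.sum_le_sum fun j _ => (hterm j i).2
          _ = (N.card : ℝ) * c i := by rw [Finset.sum_const, nsmul_eq_mul]
      calc (N.card : ℝ)⁻¹ * ∑ j ∈ N, phiMap v (w j) i
          ≤ (N.card : ℝ)⁻¹ * ((N.card : ℝ) * c i) := by
            apply mul_le_mul_of_nonneg_left hs (inv_nonneg.2 hcard.le)
        _ = (c i : ℝ) := by rw [← mul_assoc, inv_mul_cancel₀ hcard.ne', one_mul]
    have hlb : ∀ i, (c i : ℝ) - 1 < phiMap v y0 i := by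
      intro i
      rw [happ]
      have hs : (N.card : ℝ) * ((c i : ℝ) - 1) < ∑ j ∈ N, phiMap v (w j) i := by
        calc (N.card : ℝ) * ((c i : ℝ) - 1) = ∑ _j ∈ N, ((c i : ℝ) - 1) := by
              rw [Finset.sum_const, nsmul_eq_mul]
          _ < ∑ j ∈ N, phiMap v (w j) i :=
              Finset.sum_lt_sum_of_nonempty hNne fun j _ => (hterm j i).1
      calc (c i : ℝ) - 1 = (N.card : ℝ)⁻¹ * ((N.card : ℝ) * ((c i : ℝ) - 1)) := by
              rw [← mul_assoc, inv_mul_cancel₀ hcard.ne', one_mul]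
        _ < (N.card : ℝ)⁻¹ * ∑ j ∈ N, phiMap v (w j) i := by
            apply mul_lt_mul_of_pos_left hs (inv_pos.2 hcard)
    have hstrict : ∀ i ∈ N, phiMap v y0 i < (c i : ℝ) := by
      intro i hi
      rw [happ]
      have hs : ∑ j ∈ N, phiMap v (w j) i < (N.card : ℝ) * c i := by
        calc ∑ j ∈ N, phiMap v (w j) i < ∑ _j ∈ N, (c i : ℝ) := by
              apply Finset.sum_lt_sum (fun j _ => (hterm j i).2)
              exact ⟨i, hi, lt_of_le_of_ne (hterm i i).2 (hwne i hi (c i))⟩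
          _ = (N.card : ℝ) * c i := by rw [Finset.sum_const, nsmul_eq_mul]
      calc (N.card : ℝ)⁻¹ * ∑ j ∈ N, phiMap v (w j) i
          < (N.card : ℝ)⁻¹ * ((N.card : ℝ) * c i) := by
            apply mul_lt_mul_of_pos_left hs (inv_pos.2 hcard)
        _ = (c i : ℝ) := by rw [← mul_assoc, inv_mul_cancel₀ hcard.ne', one_mul]
    exact ⟨y0, (phi_mem v).2 fun i => ⟨hlb i, hub i⟩,
      fun j hj => hstrict j ((hmemN j).2 hj)⟩
set_option maxHeartbeats 2000000 in
theorem stmt9 {n k : ℕ} (v : Fin k → Fin n → ℤ) (c : Fin k → ℤ)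
    (hc : ({y : Fin n → ℝ | PhiMap v y = c}).Nonempty)
    (u : Fin n → ℝ) (hu : PhiMap v u = c) :
    let π := (LinearMap.range (phiMap v)).mkQ
    let Z := π '' {x : Fin k → ℝ | ∀ j, x j ∈ Set.Ico (0 : ℝ) 1}
    let p := π (fun j => (c j : ℝ))
    let Fp := ⋂₀ {F : Set ((Fin k → ℝ) ⧸ LinearMap.range (phiMap v)) |
      IsExtreme ℝ Z F ∧ p ∈ F}
    let J : Set (Fin k) :=
      {j | ∀ y ∈ {y : Fin n → ℝ | PhiMap v y = c}, ∃ m : ℤ, phiMap v y j = (m : ℝ)}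
    let spanS := Submodule.span ℝ ((fun s => s - u) '' {y : Fin n → ℝ | PhiMap v y = c})
    Module.finrank ℝ ↥(Submodule.span ℝ ((fun x => x - p) '' Fp)) +
      Module.finrank ℝ ↥spanS =
    k - J.ncard + Module.finrank ℝ ↥(LinearMap.ker (phiMap v) ⊓ spanS) := by
  classical
  intro π Z p Fp J spanS
  -- basic consequences of membership in J
  have hJ_eq : ∀ j ∈ J, ∀ y, PhiMap v y = c → phiMap v y j = (c j : ℝ) := by
    intro j hj y hy
    obtain ⟨m, hm⟩ := hj y hy
    exact phi_int_eq v hy m hm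
  have hnotJ : ∀ j, j ∉ J → ∃ y, PhiMap v y = c ∧ ∀ m : ℤ, phiMap v y j ≠ (m : ℝ) := by
    intro j hj
    by_contra h
    push_neg at h
    exact hj fun y hy => h y hy
  -- interior point
  obtain ⟨y0, hy0c, hy0lt'⟩ := exists_interior v c u hu
  have hy0 := (phi_mem v).1 hy0c
  have hy0lt : ∀ j, j ∉ J → phiMap v y0 j < (c j : ℝ) := fun j hj => hy0lt' j (hnotJ j hj)
  -- the canonical lift of p
  set t : Fin k → ℝ := fun j => (c j : ℝ) - phiMap v y0 j with ht
  have htC : ∀ j, t j ∈ Set.Ico (0 : ℝ) 1 :=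
    fun j => ⟨by simp only [ht]; linarith [(hy0 j).2], by simp only [ht]; linarith [(hy0 j).1]⟩
  have htJ : ∀ j ∈ J, t j = 0 := by
    intro j hj
    have := hJ_eq j hj y0 hy0c
    simp only [ht]; linarith
  have htpos : ∀ j, j ∉ J → 0 < t j ∧ t j < 1 := by
    intro j hj
    exact ⟨by simp only [ht]; linarith [hy0lt j hj], (htC j).2⟩
  have hπt : π t = p := by
    show Submodule.mkQ _ t = Submodule.mkQ _ _
    rw [Submodule.mkQ_apply, Submodule.mkQ_apply, Submodule.Quotient.eq]
    refine ⟨-y0, ?_⟩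
    funext j
    simp only [map_neg, Pi.neg_apply, Pi.sub_apply, ht]
    ring
  -- every box lift of p vanishes on J
  have hliftp : ∀ s : Fin k → ℝ, (∀ j, s j ∈ Set.Ico (0 : ℝ) 1) → π s = p →
      ∀ j ∈ J, s j = 0 := by
    intro s hs hπs j hj
    have hmem : s - (fun j => (c j : ℝ)) ∈ LinearMap.range (phiMap v) := by
      rw [← Submodule.Quotient.eq]
      exact hπs
    obtain ⟨y', hy'⟩ := hmem
    have hyi : ∀ i, phiMap v (-y') i = (c i : ℝ) - s i := by
      intro i
      have := congrFun hy' i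
      simp only [Pi.sub_apply] at this
      simp only [map_neg, Pi.neg_apply]
      linarith
    have hyc : PhiMap v (-y') = c := by
      refine (phi_mem v).2 fun i => ?_
      rw [hyi i]
      exact ⟨by linarith [(hs i).2], by linarith [(hs i).1]⟩
    have := hJ_eq j hj (-y') hyc
    rw [hyi j] at this
    linarith
  -- the subspace U of vectors vanishing on J
  set U : Submodule ℝ (Fin k → ℝ) :=
    { carrier := {x | ∀ j ∈ J, x j = 0}
      add_mem' := by intro a b ha hb j hj; simp [Set.mem_setOf_eq] at *; rw [ha j hj, hb j hj]; ring
      zero_mem' := by intro j hj; rfl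
      smul_mem' := by intro r a ha j hj; simp only [Pi.smul_apply, smul_eq_mul]
                      rw [ha j hj]; ring } with hU
  have hUmem : ∀ x : Fin k → ℝ, x ∈ U ↔ ∀ j ∈ J, x j = 0 := fun _ => Iff.rfl
  -- p lies in Z
  have hpZ : p ∈ Z := ⟨t, htC, hπt⟩
  -- the extreme set E
  set E : Set ((Fin k → ℝ) ⧸ LinearMap.range (phiMap v)) :=
    {q | q ∈ Z ∧ ∀ s : Fin k → ℝ, (∀ j, s j ∈ Set.Ico (0 : ℝ) 1) → π s = q →
      ∀ j ∈ J, s j = 0} with hE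
  have hpE : p ∈ E := ⟨hpZ, hliftp⟩
  have hcomb : ∀ (a b : ℝ) (s1 s2 : Fin k → ℝ), 0 < a → 0 < b → a + b = 1 →
      (∀ j, s1 j ∈ Set.Ico (0 : ℝ) 1) → (∀ j, s2 j ∈ Set.Ico (0 : ℝ) 1) →
      ∀ j, (a • s1 + b • s2) j ∈ Set.Ico (0 : ℝ) 1 := by
    intro a b s1 s2 ha hb hab hs1 hs2 j
    simp only [Pi.add_apply, Pi.smul_apply, smul_eq_mul]
    constructor
    · have := mul_nonneg ha.le (hs1 j).1
      have := mul_nonneg hb.le (hs2 j).1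
      linarith
    · have h1 : a * s1 j < a * 1 := by
        apply mul_lt_mul_of_pos_left (hs1 j).2 ha
      have h2 : b * s2 j < b * 1 := by
        apply mul_lt_mul_of_pos_left (hs2 j).2 hb
      nlinarith
  have hEext : IsExtreme ℝ Z E := by
    constructor
    · exact fun q hq => hq.1
    · rintro q1 hq1 q2 hq2 q hqE hseg
      obtain ⟨a, b, ha, hb, hab, hsum⟩ := hseg
      obtain ⟨s1, hs1, hπ1⟩ := hq1
      obtain ⟨s2, hs2, hπ2⟩ := hq2
      have key : ∀ (r1 r2 : Fin k → ℝ), (∀ j, r1 j ∈ Set.Ico (0 : ℝ) 1) →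
          (∀ j, r2 j ∈ Set.Ico (0 : ℝ) 1) → π r1 = q1 → π r2 = q2 →
          ∀ j ∈ J, r1 j = 0 ∧ r2 j = 0 := by
        intro r1 r2 hr1 hr2 hπr1 hπr2 j hj
        have hπs : π (a • r1 + b • r2) = q := by
          rw [map_add, map_smul, map_smul, hπr1, hπr2, hsum]
        have h0 := hqE.2 _ (hcomb a b r1 r2 ha hb hab hr1 hr2) hπs j hj
        simp only [Pi.add_apply, Pi.smul_apply, smul_eq_mul] at h0
        constructor
        · nlinarith [(hr1 j).1, (hr2 j).1, mul_nonneg ha.le (hr1 j).1,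
            mul_nonneg hb.le (hr2 j).1]
        · nlinarith [(hr1 j).1, (hr2 j).1, mul_nonneg ha.le (hr1 j).1,
            mul_nonneg hb.le (hr2 j).1]
      refine ⟨⟨s1, hs1, hπ1⟩, ?_⟩
      intro s hs hπs j hj
      exact (key s s2 hs hs2 hπs hπ2 j hj).1
  have hFpE : Fp ⊆ E := Set.sInter_subset_of_mem ⟨hEext, hpE⟩
  have hpFp : p ∈ Fp := Set.mem_sInter.2 fun F hF => hF.2
  -- span of (Fp - p) equals map π U
  have hsingle : ∀ j, j ∉ J →
      π (Pi.single j (1 : ℝ)) ∈ Submodule.span ℝ ((fun x => x - p) '' Fp) := by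
    intro j hj
    obtain ⟨h0t, h1t⟩ := htpos j hj
    set ε : ℝ := min (t j) (1 - t j) / 2 with hεdef
    have hmpos : 0 < min (t j) (1 - t j) := lt_min h0t (by linarith)
    have hεpos : 0 < ε := by rw [hεdef]; exact div_pos hmpos two_pos
    have hεlt1 : ε < t j := by
      rw [hεdef]
      calc min (t j) (1 - t j) / 2 < min (t j) (1 - t j) := half_lt_self hmpos
        _ ≤ t j := min_le_left _ _
    have hεlt2 : ε < 1 - t j := by
      rw [hεdef]
      calc min (t j) (1 - t j) / 2 < min (t j) (1 - t j) := half_lt_self hmpos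
        _ ≤ 1 - t j := min_le_right _ _
    set PSJ : Fin k → ℝ := Pi.single j 1 with hPSJ
    have hsingleval : ∀ i, PSJ i = if i = j then 1 else 0 := by
      intro i
      rw [hPSJ]
      by_cases h : i = j
      · subst h; simp
      · simp [Pi.single_apply, h]
    have hC1 : ∀ i, (t + ε • PSJ) i ∈ Set.Ico (0 : ℝ) 1 := by
      intro i
      simp only [Pi.add_apply, Pi.smul_apply, smul_eq_mul, hsingleval i]
      by_cases h : i = j
      · subst h; simp only [if_true, eq_self_iff_true, mul_one]
        exact ⟨by linarith, by linarith⟩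
      · simp only [if_neg h, mul_zero, add_zero]
        exact htC i
    have hC2 : ∀ i, (t - ε • PSJ) i ∈ Set.Ico (0 : ℝ) 1 := by
      intro i
      simp only [Pi.sub_apply, Pi.smul_apply, smul_eq_mul, hsingleval i]
      by_cases h : i = j
      · subst h; simp only [if_true, eq_self_iff_true, mul_one]
        exact ⟨by linarith, by linarith [(htC i).2]⟩
      · simp only [if_neg h, mul_zero, sub_zero]
        exact htC i
    have hq1Z : π (t - ε • PSJ) ∈ Z := ⟨_, hC2, rfl⟩
    have hq2Z : π (t + ε • PSJ) ∈ Z := ⟨_, hC1, rfl⟩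
    have hseg : p ∈ openSegment ℝ (π (t - ε • PSJ)) (π (t + ε • PSJ)) := by
      refine ⟨1/2, 1/2, by norm_num, by norm_num, by norm_num, ?_⟩
      rw [← map_smul, ← map_smul, ← map_add, ← hπt]
      congr 1
      module
    have hq2F : π (t + ε • PSJ) ∈ Fp := by
      refine Set.mem_sInter.2 fun F hF => ?_
      exact hF.1.2 hq2Z hq1Z hF.2 (by rwa [openSegment_symm] at hseg)
    have hdiff : π (t + ε • PSJ) - p ∈ Submodule.span ℝ ((fun x => x - p) '' Fp) :=
      Submodule.subset_span ⟨_, hq2F, rfl⟩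
    have heq : π (t + ε • PSJ) - p = ε • π PSJ := by
      rw [← hπt, ← map_smul, ← map_sub]
      congr 1
      module
    rw [heq] at hdiff
    have := Submodule.smul_mem _ ε⁻¹ hdiff
    rwa [smul_smul, inv_mul_cancel₀ hεpos.ne', one_smul] at this
  have hspanF : Submodule.span ℝ ((fun x => x - p) '' Fp) = Submodule.map π U := by
    apply le_antisymm
    · rw [Submodule.span_le]
      rintro _ ⟨q, hq, rfl⟩
      obtain ⟨⟨s, hsC', hπs⟩, hq0⟩ := hFpE hq
      refine ⟨s - t, ?_, ?_⟩
      · intro i hi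
        simp only [Pi.sub_apply]
        rw [hq0 s hsC' hπs i hi, htJ i hi, sub_zero]
      · rw [map_sub, hπs, hπt]
    · rintro x ⟨x', hx', rfl⟩
      have hx'J : ∀ i ∈ J, x' i = 0 := hx'
      have hsum : x' = ∑ i, Pi.single i (x' i) := (Finset.univ_sum_single x').symm
      rw [hsum, map_sum]
      apply Submodule.sum_mem
      intro i _
      by_cases hi : i ∈ J
      · rw [hx'J i hi]
        simp
      · have : (Pi.single i (x' i) : Fin k → ℝ) = x' i • (Pi.single i (1:ℝ) : Fin k → ℝ) := by
          funext l
          by_cases h : l = i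
          · subst h; simp
          · simp [Pi.single_apply, h]
        rw [this, map_smul]
        exact Submodule.smul_mem _ _ (hsingle i hi)
  -- map φ spanS = range φ ⊓ U
  have hmapS : Submodule.map (phiMap v) spanS = LinearMap.range (phiMap v) ⊓ U := by
    apply le_antisymm
    · rw [Submodule.map_le_iff_le_comap, Submodule.span_le]
      rintro _ ⟨y, hy, rfl⟩
      refine Submodule.mem_comap.2 (Submodule.mem_inf.2 ⟨⟨y - u, rfl⟩, ?_⟩)
      intro i hi
      rw [map_sub]
      simp only [Pi.sub_apply]
      rw [hJ_eq i hi y hy, hJ_eq i hi u hu, sub_self]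
    · rintro x hx
      obtain ⟨hxr, hxU⟩ := Submodule.mem_inf.1 hx
      obtain ⟨y, rfl⟩ := hxr
      have hyU : ∀ i ∈ J, phiMap v y i = 0 := hxU
      -- choose ε small
      set M : ℝ := 1 + ∑ i, |phiMap v y i| with hM
      have hMpos : 0 < M := by
        have : (0:ℝ) ≤ ∑ i, |phiMap v y i| := Finset.sum_nonneg fun i _ => abs_nonneg _
        simp only [hM]; linarith
      have hMi : ∀ i, |phiMap v y i| ≤ M - 1 := by
        intro i
        have := Finset.single_le_sum (f := fun i => |phiMap v y i|)
          (fun i _ => abs_nonneg _) (Finset.mem_univ i)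
        simp only [hM]; linarith
      have hgap : ∀ i, i ∉ J → 0 < (c i : ℝ) - phiMap v y0 i ∧
          0 < phiMap v y0 i - ((c i : ℝ) - 1) := by
        intro i hi
        exact ⟨by linarith [hy0lt i hi], by linarith [(hy0 i).1]⟩
      -- δ as minimum gap over non-J coordinates; handle emptiness
      by_cases hall : ∀ i, i ∈ J
      · -- then x = 0
        have : phiMap v y = 0 := by
          funext i; exact hyU i (hall i)
        rw [this]
        exact Submodule.zero_mem _
      · push_neg at hall
        obtain ⟨i0, hi0⟩ := hall
        set N' : Finset (Fin k) := Finset.univ.filter (fun i => i ∉ J) with hN'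
        have hmemN' : ∀ i, i ∈ N' ↔ i ∉ J := by intro i; simp [hN']
        have hN'ne : N'.Nonempty := ⟨i0, (hmemN' i0).2 hi0⟩
        set δ : ℝ := N'.inf' hN'ne
          (fun i => min ((c i : ℝ) - phiMap v y0 i) (phiMap v y0 i - ((c i : ℝ) - 1))) with hδ
        have hδpos : 0 < δ := by
          rw [hδ, Finset.lt_inf'_iff]
          intro i hi
          obtain ⟨h1, h2⟩ := hgap i ((hmemN' i).1 hi)
          exact lt_min h1 h2
        have hδle : ∀ i, i ∉ J → δ ≤ (c i : ℝ) - phiMap v y0 i ∧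
            δ ≤ phiMap v y0 i - ((c i : ℝ) - 1) := by
          intro i hi
          have h1 : δ ≤ min ((c i : ℝ) - phiMap v y0 i) (phiMap v y0 i - ((c i : ℝ) - 1)) :=
            Finset.inf'_le _ ((hmemN' i).2 hi)
          exact ⟨le_trans h1 (min_le_left _ _), le_trans h1 (min_le_right _ _)⟩
        set ε : ℝ := δ / (2 * M) with hε
        have hεpos : 0 < ε := div_pos hδpos (by linarith)
        have hkey : ∀ i, |ε * phiMap v y i| < δ := by
          intro i
          rw [abs_mul, abs_of_pos hεpos]
          have h1 : ε * |phiMap v y i| ≤ ε * (M - 1) :=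
            mul_le_mul_of_nonneg_left (hMi i) hεpos.le
          have h2 : ε * (M - 1) < δ := by
            rw [hε, div_mul_eq_mul_div, div_lt_iff₀ (by linarith : (0:ℝ) < 2 * M)]
            nlinarith
          linarith
        have hynew : PhiMap v (y0 + ε • y) = c := by
          refine (phi_mem v).2 fun i => ?_
          rw [map_add, map_smul]
          simp only [Pi.add_apply, Pi.smul_apply, smul_eq_mul]
          by_cases hi : i ∈ J
          · rw [hyU i hi, mul_zero, add_zero]
            exact ⟨(hy0 i).1, (hy0 i).2⟩
          · obtain ⟨hg1, hg2⟩ := hδle i hi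
            have habs := hkey i
            have h3 := abs_lt.1 habs
            constructor
            · linarith [h3.1, hg2]
            · linarith [h3.2, hy0lt i hi]
        have hεy : ε • y ∈ spanS := by
          have h1 : (y0 + ε • y) - u ∈ spanS := Submodule.subset_span ⟨_, hynew, rfl⟩
          have h2 : y0 - u ∈ spanS := Submodule.subset_span ⟨_, hy0c, rfl⟩
          have := Submodule.sub_mem _ h1 h2
          simpa using this
        have hy' : y ∈ spanS := by
          have := Submodule.smul_mem _ ε⁻¹ hεy
          rwa [smul_smul, inv_mul_cancel₀ hεpos.ne', one_smul] at this
        exact ⟨y, hy', rfl⟩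
  -- dimension of U
  haveI : Fintype ↥J := Fintype.ofFinite _
  have hdimU : Module.finrank ℝ ↥U + J.ncard = k := by
    set restr : (Fin k → ℝ) →ₗ[ℝ] (↥J → ℝ) := LinearMap.funLeft ℝ ℝ (fun j : ↥J => (j : Fin k))
      with hrestr
    have hker : LinearMap.ker restr = U := by
      ext x
      simp only [LinearMap.mem_ker, hrestr, LinearMap.funLeft_apply, hUmem]
      constructor
      · intro h j hj
        exact congrFun h ⟨j, hj⟩
      · intro h
        funext j
        exact h j j.2
    have hsurj : Function.Surjective restr :=
      LinearMap.funLeft_surjective_of_injective ℝ ℝ _ Subtype.val_injective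
    have h := LinearMap.finrank_range_add_finrank_ker restr
    rw [hker, LinearMap.range_eq_top.2 hsurj] at h
    rw [finrank_top] at h
    have hcardJ : J.ncard = Fintype.card ↥J := by
      rw [Set.ncard_eq_toFinset_card']
      exact Set.toFinset_card J
    have hfr : Module.finrank ℝ (↥J → ℝ) = Fintype.card ↥J := Module.finrank_pi ℝ
    have hfk : Module.finrank ℝ (Fin k → ℝ) = k := by simp
    rw [hfr, hfk] at h
    omega
  -- final assembly
  have h2 := rn π U
  have h3 := rn (phiMap v) spanS
  have hkerπ : LinearMap.ker π = LinearMap.range (phiMap v) := Submodule.ker_mkQ _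
  rw [hmapS] at h3
  rw [hkerπ] at h2
  rw [hspanF]
  have hA := h2
  have hB := h3
  omega
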